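/- Let x₁, …, x_T ∈ ℝ and for 0 ≤ a < b ≤ T define C_a^{(b)}(θ) = Σ_{t=a+1}^{b} θ·(x_t − θ/2). Fix candidate change locations τ_i < τ_{i+1} ≤ T−1, and let l_i ≥ 0 be the largest nonnegative root of the difference quadratic C_{τ_i}^{(τ_{i+1})}(θ) (so C_{τ_i}^{(τ_{i+1})}(θ) ≥ 0 on [0, l_i]). Suppose the largest root of the quadratic C_{τ_{i+1}}^{(T−1)}(θ) is at most l_i. Then for every θ ≥ 0, C_{τ_{i+1}}^{(T)}(θ) ≤ max{ C_{τ_i}^{(T)}(θ), C_{T−1}^{(T)}(θ) }; consequently removing the curve with index τ_{i+1} does not change the pointwise maximum over θ ≥ 0 of the curves indexed by {τ_i, τ_{i+1}, T−1}. -/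

import Mathlib

open Finset

lemma sum_quad_form (x : ℕ → ℝ) (a b : ℕ) (θ : ℝ) :
    (∑ t ∈ Finset.Ioc a b, θ * (x t - θ / 2))
      = θ * (∑ t ∈ Finset.Ioc a b, x t) - ((Finset.Ioc a b).card : ℝ) * (θ ^ 2 / 2) := by
  have h : ∀ t ∈ Finset.Ioc a b, θ * (x t - θ / 2) = θ * x t - θ ^ 2 / 2 := by
    intro t _; ring
  rw [Finset.sum_congr rfl h, Finset.sum_sub_distrib, ← Finset.mul_sum,
    Finset.sum_const, nsmul_eq_mul]

theorem focus_pruning_correctness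
    (T : ℕ) (hT : 1 ≤ T) (x : ℕ → ℝ)
    (τi τi1 : ℕ) (hii : τi < τi1) (hi1T : τi1 ≤ T - 1)
    (li : ℝ) (hli0 : 0 ≤ li)
    -- `li` is the largest nonnegative root of the difference quadratic `C_{τi}^{(τi1)}`
    (hliroot : (∑ t ∈ Finset.Ioc τi τi1, li * (x t - li / 2)) = 0)
    (hlilargest : ∀ θ : ℝ, 0 ≤ θ → (∑ t ∈ Finset.Ioc τi τi1, θ * (x t - θ / 2)) = 0 → θ ≤ li)
    -- the largest root of `C_{τi1}^{(T-1)}` is at most `li`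
    (hroot2 : ∃ r : ℝ, r ≤ li ∧ (∑ t ∈ Finset.Ioc τi1 (T - 1), r * (x t - r / 2)) = 0 ∧
      ∀ θ : ℝ, (∑ t ∈ Finset.Ioc τi1 (T - 1), θ * (x t - θ / 2)) = 0 → θ ≤ r) :
    ∀ θ : ℝ, 0 ≤ θ →
      (∑ t ∈ Finset.Ioc τi1 T, θ * (x t - θ / 2))
        ≤ max (∑ t ∈ Finset.Ioc τi T, θ * (x t - θ / 2))
            (∑ t ∈ Finset.Ioc (T - 1) T, θ * (x t - θ / 2)) := by
  intro θ hθ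
  have hT1T : T - 1 ≤ T := Nat.sub_le T 1
  have hi1TT : τi1 ≤ T := le_trans hi1T hT1T
  rcases le_or_gt θ li with hθli | hliθ
  · -- θ ≤ li : the curve C_{τi}^{(τi1)} is nonnegative at θ
    have hsplit : (∑ t ∈ Finset.Ioc τi τi1, θ * (x t - θ / 2))
        + (∑ t ∈ Finset.Ioc τi1 T, θ * (x t - θ / 2))
        = ∑ t ∈ Finset.Ioc τi T, θ * (x t - θ / 2) :=
      Finset.sum_Ioc_consecutive _ (le_of_lt hii) hi1TT
    have hD : 0 ≤ ∑ t ∈ Finset.Ioc τi τi1, θ * (x t - θ / 2) := by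
      set A := ∑ t ∈ Finset.Ioc τi τi1, x t with hA
      set n := ((Finset.Ioc τi τi1).card : ℝ) with hn
      have hn0 : (0 : ℝ) ≤ n := Nat.cast_nonneg _
      rw [sum_quad_form] at hliroot ⊢
      rcases eq_or_lt_of_le hli0 with h0 | h0
      · have hθ0 : θ = 0 := le_antisymm (h0 ▸ hθli) hθ
        simp [hθ0]
      · have hA' : θ * (li * A) = θ * (n * (li ^ 2 / 2)) := by
          have : li * A = n * (li ^ 2 / 2) := by linarith [hliroot]
          rw [this]
        nlinarith [mul_nonneg (mul_nonneg hn0 hθ) (sub_nonneg.mpr hθli), h0, hA']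
    refine le_trans ?_ (le_max_left _ _)
    linarith
  · -- li < θ : the curve C_{τi1}^{(T-1)} is nonpositive at θ
    obtain ⟨r, hrli, hrroot, hrmax⟩ := hroot2
    have hsplit : (∑ t ∈ Finset.Ioc τi1 (T - 1), θ * (x t - θ / 2))
        + (∑ t ∈ Finset.Ioc (T - 1) T, θ * (x t - θ / 2))
        = ∑ t ∈ Finset.Ioc τi1 T, θ * (x t - θ / 2) :=
      Finset.sum_Ioc_consecutive _ hi1T hT1T
    have hQ : (∑ t ∈ Finset.Ioc τi1 (T - 1), θ * (x t - θ / 2)) ≤ 0 := by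
      rcases eq_or_lt_of_le hi1T with heq | hlt
      · simp [← heq]
      · set B := ∑ t ∈ Finset.Ioc τi1 (T - 1), x t with hB
        set m := ((Finset.Ioc τi1 (T - 1)).card : ℝ) with hm
        have hmpos : (0 : ℝ) < m := by
          rw [hm, Nat.card_Ioc]
          exact_mod_cast Nat.sub_pos_of_lt hlt
        set ρ := 2 * B / m with hρ
        have hρm : ρ * m = 2 * B := by
          rw [hρ]; field_simp
        have hρr : ρ ≤ r := by
          apply hrmax
          rw [sum_quad_form]
          linear_combination (-(ρ / 2)) * hρm
        have hθρ : ρ < θ := lt_of_le_of_lt (le_trans hρr hrli) hliθ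
        rw [sum_quad_form]
        have h1 : 0 ≤ θ * (θ - ρ) := mul_nonneg hθ (sub_nonneg.mpr (le_of_lt hθρ))
        have hρm' : θ * (ρ * m) = θ * (2 * B) := by rw [hρm]
        nlinarith [h1, hmpos, hρm']
    refine le_trans ?_ (le_max_right _ _)
    linarith
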